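/- Let d ≥ 2 and suppose [n] is the disjoint union of sets X_1,…,X_e. Let D = {(A_i^{(1)},…,A_i^{(d)})}_{1≤i≤m} be a skew Bollobás system of d-partitions of [n]. Let S = ⋃_{i=1}^m ⋃_{r=1}^d A_i^{(r)} and s_k = |S ∩ X_k| for k ∈ [e]. Then ∑_{i=1}^m ( ∏_{k=1}^e binom(∑_{r=1}^d |A_i^{(r)} ∩ X_k|; |A_i^{(1)} ∩ X_k|,…,|A_i^{(d)} ∩ X_k|) )^{-1} ≤ ∏_{k=1}^e binom(s_k + d - 1, d - 1). -/

import Mathlib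

open Finset Equiv
namespace SBP
set_option linter.unusedSectionVars false
set_option maxHeartbeats 1000000



/-- Two lower subsets (within `P`) of the same cardinality are equal. -/
lemma lower_eq {β : Type*} [LinearOrder β] [DecidableEq β] {P U V : Finset β}
    (hU : U ⊆ P) (hV : V ⊆ P)
    (hUl : ∀ x ∈ U, ∀ y ∈ P, y ≤ x → y ∈ U)
    (hVl : ∀ x ∈ V, ∀ y ∈ P, y ≤ x → y ∈ V)
    (hcard : U.card = V.card) : U = V := by
  have key : ∀ (W : Finset β), W ⊆ P → (∀ x ∈ W, ∀ y ∈ P, y ≤ x → y ∈ W) →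
      ∀ x ∈ P, (x ∈ W ↔ (P.filter (fun y => y ≤ x)).card ≤ W.card) := by
    intro W hWP hWl x hx
    constructor
    · intro hxW
      refine Finset.card_le_card ?_
      intro y hy
      simp only [Finset.mem_filter] at hy
      exact hWl x hxW y hy.1 hy.2
    · intro hle
      by_contra hxW
      have hsub : W ⊆ P.filter (fun y => y < x) := by
        intro y hyW
        refine Finset.mem_filter.mpr ⟨hWP hyW, ?_⟩
        rcases lt_or_ge y x with h | h
        · exact h
        · exact absurd (hWl y hyW x hx h) hxW
      have h1 : (P.filter (fun y => y < x)).card < (P.filter (fun y => y ≤ x)).card := by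
        refine Finset.card_lt_card ?_
        constructor
        · intro y hy
          simp only [Finset.mem_filter] at hy ⊢
          exact ⟨hy.1, le_of_lt hy.2⟩
        · intro hcon
          have hxmem : x ∈ P.filter (fun y => y ≤ x) := Finset.mem_filter.mpr ⟨hx, le_refl x⟩
          have := hcon hxmem
          simp only [Finset.mem_filter] at this
          exact lt_irrefl x this.2
      have := (Finset.card_le_card hsub).trans_lt h1
      omega
    
  ext x
  constructor
  · intro hxU
    have hxP := hU hxU
    rw [key V hV hVl x hxP, ← hcard]
    exact ((key U hU hUl x hxP).mp hxU)
  · intro hxV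
    have hxP := hV hxV
    rw [key U hU hUl x hxP, hcard]
    exact ((key V hV hVl x hxP).mp hxV)

/-- Two functions monotone on `P` with fibers of equal cardinality agree on `P`. -/
lemma mono_eq {β : Type*} [LinearOrder β] [DecidableEq β] {d : ℕ} {P : Finset β}
    {f g : β → Fin d}
    (hf : ∀ x ∈ P, ∀ y ∈ P, x ≤ y → f x ≤ f y)
    (hg : ∀ x ∈ P, ∀ y ∈ P, x ≤ y → g x ≤ g y)
    (hfib : ∀ r, (P.filter (fun x => f x = r)).card = (P.filter (fun x => g x = r)).card) :
    ∀ x ∈ P, f x = g x := by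
  have aux : ∀ (f g : β → Fin d),
      (∀ x ∈ P, ∀ y ∈ P, x ≤ y → f x ≤ f y) →
      (∀ x ∈ P, ∀ y ∈ P, x ≤ y → g x ≤ g y) →
      (∀ r, (P.filter (fun x => f x = r)).card = (P.filter (fun x => g x = r)).card) →
      ∀ x ∈ P, ¬ f x < g x := by
    intro f g hf hg hfib x hx hlt
    set r := f x with hr
    have hUV : P.filter (fun y => f y ≤ r) = P.filter (fun y => g y ≤ r) := by
      have hcards : ∀ (h : β → Fin d), (P.filter (fun y => h y ≤ r)).card
          = ∑ r' ∈ Finset.univ.filter (fun r' : Fin d => r' ≤ r),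
              (P.filter (fun x => h x = r')).card := by
        intro h
        rw [← Finset.card_biUnion]
        · congr 1
          ext y
          simp only [Finset.mem_biUnion, Finset.mem_filter, Finset.mem_univ, true_and]
          constructor
          · rintro ⟨hy, hle⟩; exact ⟨h y, hle, hy, rfl⟩
          · rintro ⟨r', hle, hy, hEq⟩; exact ⟨hy, hEq ▸ hle⟩
        · intro a _ b _ hab
          simp only [Finset.disjoint_left, Finset.mem_filter]
          rintro y ⟨hy, h1⟩ ⟨_, h2⟩
          exact hab (h1 ▸ h2 ▸ rfl)
      apply lower_eq (Finset.filter_subset _ _) (Finset.filter_subset _ _)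
      · intro a ha y hy hle
        simp only [Finset.mem_filter] at ha ⊢
        exact ⟨hy, le_trans (hf y hy a ha.1 hle) ha.2⟩
      · intro a ha y hy hle
        simp only [Finset.mem_filter] at ha ⊢
        exact ⟨hy, le_trans (hg y hy a ha.1 hle) ha.2⟩
      · rw [hcards f, hcards g]
        exact Finset.sum_congr rfl (fun r' _ => hfib r')
    have hxU : x ∈ P.filter (fun y => f y ≤ r) := Finset.mem_filter.mpr ⟨hx, le_refl _⟩
    rw [hUV] at hxU
    have := (Finset.mem_filter.mp hxU).2
    exact absurd hlt (not_lt.mpr this)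
  intro x hx
  have h1 := aux f g hf hg hfib x hx
  have h2 := aux g f hg hf (fun r => (hfib r).symm) x hx
  exact le_antisymm (not_lt.mp h2) (not_lt.mp h1)


variable {α : Type*} [Fintype α] [DecidableEq α]

/-- Cardinality of a "coset": permutations with a prescribed composition with `u`. -/
lemma card_coset {ι : Type*} [Fintype ι] [DecidableEq ι] (u : α → ι) (σ₀ : Equiv.Perm α) :
    (Finset.univ.filter fun σ : Equiv.Perm α => u ∘ σ = u ∘ σ₀).card
      = ∏ b : ι, (Finset.univ.filter fun x => u x = b).card.factorial := by
  set v : α → ι := u ∘ σ₀ with hv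
  have step1 : (Finset.univ.filter fun σ : Equiv.Perm α => u ∘ σ = u ∘ σ₀).card
      = (Finset.univ.filter fun τ : Equiv.Perm α => v ∘ τ = v).card := by
    apply Finset.card_nbij (fun σ => σ₀⁻¹ * σ)
    · intro σ hσ
      simp only [Finset.mem_coe, Finset.mem_filter, Finset.mem_univ, true_and] at hσ ⊢
      funext x
      have h1 : u (σ x) = u (σ₀ x) := congrFun hσ x
      simp only [Function.comp_apply, hv, Equiv.Perm.mul_apply, Equiv.Perm.coe_inv, Equiv.apply_symm_apply]
      exact h1
    · intro a _ b _ hab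
      simpa using congrArg (fun τ => σ₀ * τ) hab
    · intro τ hτ
      simp only [Finset.coe_filter, Set.mem_setOf_eq, Finset.mem_univ, true_and] at hτ
      refine ⟨σ₀ * τ, ?_, by group⟩
      simp only [Finset.coe_filter, Set.mem_setOf_eq, Finset.mem_univ, true_and]
      funext x
      have := congrFun hτ x
      simp only [Function.comp_apply, hv, Equiv.Perm.mul_apply] at this ⊢
      exact this
  rw [step1]
  have step2 : (Finset.univ.filter fun τ : Equiv.Perm α => v ∘ τ = v).card
      = Fintype.card {g : Equiv.Perm α // v ∘ g = v} := (Fintype.card_subtype _).symm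
  rw [step2, DomMulAct.stabilizer_card]
  refine Finset.prod_congr rfl (fun b _ => ?_)
  congr 1
  rw [← Fintype.card_subtype]
  exact Fintype.card_congr (σ₀.subtypeEquiv fun a => Iff.rfl)

/-- If two functions have fibers of equal cardinality, some permutation intertwines them. -/
lemma exists_comp_eq {ι : Type*} [DecidableEq ι] (u w : α → ι)
    (h : ∀ b, (Finset.univ.filter fun x => u x = b).card
        = (Finset.univ.filter fun x => w x = b).card) :
    ∃ σ : Equiv.Perm α, u ∘ σ = w := by
  have e : ∀ b, {x // w x = b} ≃ {x // u x = b} := by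
    intro b
    apply Fintype.equivOfCardEq
    rw [Fintype.card_subtype, Fintype.card_subtype, h b]
  refine ⟨Equiv.ofFiberEquiv e, ?_⟩
  funext x
  exact Equiv.ofFiberEquiv_map e x


section Rank
variable {β : Type*} [LinearOrder β] [DecidableEq β]

/-- rank of `p` within `P`. -/
def rk (P : Finset β) (p : β) : ℕ := (P.filter (fun q => q < p)).card

lemma rk_orderIso (P : Finset β) (j : Fin P.card) :
    rk P ((P.orderIsoOfFin rfl j : P) : β) = (j : ℕ) := by
  set iso := P.orderIsoOfFin rfl with hiso
  have himg : P.filter (fun q => q < ((iso j : P) : β))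
      = (Finset.Iio j).image (fun j' => ((iso j' : P) : β)) := by
    ext q
    simp only [Finset.mem_filter, Finset.mem_image, Finset.mem_Iio]
    constructor
    · rintro ⟨hq, hlt⟩
      refine ⟨iso.symm ⟨q, hq⟩, ?_, by simp⟩
      rw [← iso.lt_iff_lt, iso.apply_symm_apply]
      exact Subtype.mk_lt_mk.mpr hlt
    · rintro ⟨j', hj', rfl⟩
      exact ⟨(iso j' : P).2, Subtype.coe_lt_coe.mpr (iso.lt_iff_lt.mpr hj')⟩
  have hinj : Function.Injective (fun j' : Fin P.card => ((iso j' : P) : β)) := by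
    intro a b hab
    exact iso.injective (Subtype.coe_injective hab)
  rw [rk, himg, Finset.card_image_of_injective _ hinj, Fin.card_Iio]

lemma rk_count (P : Finset β) (c₁ c₂ : ℕ) (hc₂ : c₂ ≤ P.card) :
    (P.filter fun p => c₁ ≤ rk P p ∧ rk P p < c₂).card = c₂ - c₁ := by
  set iso := P.orderIsoOfFin rfl with hiso
  have key : ∀ p (hp : p ∈ P), rk P p = ((iso.symm ⟨p, hp⟩ : Fin P.card) : ℕ) := by
    intro p hp
    have h0 : p = ((iso (iso.symm ⟨p, hp⟩) : P) : β) := by simp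
    conv_lhs => rw [h0]
    exact rk_orderIso P _
  have himg : P.filter (fun p => c₁ ≤ rk P p ∧ rk P p < c₂)
      = (Finset.univ.filter fun j : Fin P.card => c₁ ≤ (j : ℕ) ∧ (j : ℕ) < c₂).image
          (fun j' => ((iso j' : P) : β)) := by
    ext p
    simp only [Finset.mem_filter, Finset.mem_image, Finset.mem_univ, true_and]
    constructor
    · rintro ⟨hp, h1, h2⟩
      refine ⟨iso.symm ⟨p, hp⟩, ?_, by simp⟩
      rw [key p hp] at h1 h2
      exact ⟨h1, h2⟩
    · rintro ⟨j', hj', rfl⟩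
      refine ⟨(iso j' : P).2, ?_⟩
      rw [key _ (iso j' : P).2]
      have : iso.symm ⟨((iso j' : P) : β), (iso j' : P).2⟩ = j' := by
        have : (⟨((iso j' : P) : β), (iso j' : P).2⟩ : P) = iso j' := rfl
        rw [this, iso.symm_apply_apply]
      rw [this]
      exact hj'
  have hinj : Function.Injective (fun j' : Fin P.card => ((iso j' : P) : β)) := by
    intro a b hab
    exact iso.injective (Subtype.coe_injective hab)
  rw [himg, Finset.card_image_of_injective _ hinj]
  have h2 : (Finset.univ.filter fun j : Fin P.card => c₁ ≤ (j : ℕ) ∧ (j : ℕ) < c₂)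
      = ((Finset.Ico c₁ c₂).attachFin (fun t ht => by
          simp only [Finset.mem_Ico] at ht; omega)) := by
    ext j
    simp only [Finset.mem_filter, Finset.mem_univ, true_and, Finset.mem_attachFin,
      Finset.mem_Ico]
  rw [h2, Finset.card_attachFin, Nat.card_Ico]

lemma rk_lt_card {P : Finset β} {p : β} (hp : p ∈ P) : rk P p < P.card := by
  apply Finset.card_lt_card
  constructor
  · exact Finset.filter_subset _ _
  · intro hcon
    have := hcon hp
    simp only [Finset.mem_filter] at this
    exact lt_irrefl p this.2

lemma rk_mono (P : Finset β) {p q : β} (h : q ≤ p) : rk P q ≤ rk P p := by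
  apply Finset.card_le_card
  apply Finset.monotone_filter_right
  intro x _ hx
  exact lt_of_lt_of_le hx h

end Rank

section Chunk
variable {d : ℕ}

/-- partial sums of sizes -/
def lo (a : Fin d → ℕ) (t : ℕ) : ℕ := ∑ r ∈ Finset.univ.filter (fun r : Fin d => (r : ℕ) < t), a r

lemma lo_zero (a : Fin d → ℕ) : lo a 0 = 0 := by
  rw [lo]
  convert Finset.sum_empty
  ext r; simp

lemma lo_mono (a : Fin d → ℕ) {t t' : ℕ} (h : t ≤ t') : lo a t ≤ lo a t' := by
  apply Finset.sum_le_sum_of_subset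
  apply Finset.monotone_filter_right
  intro r hr
  omega

lemma lo_succ (a : Fin d → ℕ) (r : Fin d) : lo a ((r : ℕ) + 1) = lo a (r : ℕ) + a r := by
  rw [lo, lo]
  have : Finset.univ.filter (fun r' : Fin d => (r' : ℕ) < (r : ℕ) + 1)
      = insert r (Finset.univ.filter (fun r' : Fin d => (r' : ℕ) < (r : ℕ))) := by
    ext r'
    simp only [Finset.mem_filter, Finset.mem_univ, true_and, Finset.mem_insert]
    constructor
    · intro h
      rcases Nat.lt_succ_iff_lt_or_eq.mp h with h | h
      · exact Or.inr h
      · exact Or.inl (Fin.ext h)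
    · rintro (h | h)
      · rw [h]; omega
      · omega
  rw [this, Finset.sum_insert (by simp), Nat.add_comm]

lemma lo_top (a : Fin d → ℕ) : lo a d = ∑ r, a r := by
  rw [lo]
  congr 1
  ext r; simp [r.isLt]

/-- which chunk a rank belongs to -/
def chunk (hd : 0 < d) (a : Fin d → ℕ) (ρ : ℕ) : Fin d :=
  (Finset.univ.filter (fun r : Fin d => lo a (r : ℕ) ≤ ρ)).max'
    ⟨⟨0, hd⟩, by simp [lo_zero]⟩

lemma chunk_mono (hd : 0 < d) (a : Fin d → ℕ) {ρ ρ' : ℕ} (h : ρ ≤ ρ') :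
    chunk hd a ρ ≤ chunk hd a ρ' := by
  apply Finset.max'_subset
  apply Finset.monotone_filter_right
  intro r hr
  omega

lemma chunk_eq_iff (hd : 0 < d) (a : Fin d → ℕ) {ρ : ℕ} (hρ : ρ < lo a d) (r : Fin d) :
    chunk hd a ρ = r ↔ (lo a (r : ℕ) ≤ ρ ∧ ρ < lo a ((r : ℕ) + 1)) := by
  constructor
  · intro h
    have hmem : chunk hd a ρ ∈ Finset.univ.filter (fun r : Fin d => lo a (r : ℕ) ≤ ρ) :=
      Finset.max'_mem _ _
    rw [h] at hmem
    simp only [Finset.mem_filter, Finset.mem_univ, true_and] at hmem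
    refine ⟨hmem, ?_⟩
    by_contra hcon
    push_neg at hcon
    have hlt : (r : ℕ) + 1 < d := by
      rcases Nat.lt_or_ge ((r : ℕ) + 1) d with h' | h'
      · exact h'
      · exfalso
        have : lo a d ≤ lo a ((r : ℕ) + 1) := lo_mono a (by omega)
        omega
    have : (⟨(r : ℕ) + 1, hlt⟩ : Fin d) ≤ chunk hd a ρ := by
      apply Finset.le_max'
      simp only [Finset.mem_filter, Finset.mem_univ, true_and]
      exact hcon
    rw [h] at this
    have : (r : ℕ) + 1 ≤ (r : ℕ) := this
    omega
  · rintro ⟨h1, h2⟩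
    have hle : r ≤ chunk hd a ρ := by
      apply Finset.le_max'
      simp only [Finset.mem_filter, Finset.mem_univ, true_and]
      exact h1
    have hge : chunk hd a ρ ≤ r := by
      by_contra hcon
      push_neg at hcon
      have h3 : (r : ℕ) + 1 ≤ (chunk hd a ρ : ℕ) := hcon
      have hmem : chunk hd a ρ ∈ Finset.univ.filter (fun r : Fin d => lo a (r : ℕ) ≤ ρ) :=
        Finset.max'_mem _ _
      simp only [Finset.mem_filter, Finset.mem_univ, true_and] at hmem
      have : lo a ((r : ℕ) + 1) ≤ lo a (chunk hd a ρ : ℕ) := lo_mono a h3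
      omega
    exact le_antisymm hge hle
end Chunk

section Count
variable {α : Type*} [Fintype α] [LinearOrder α]
variable {ι : Type*} [Fintype ι] [DecidableEq ι] {d : ℕ}

/-- fine label -/
def lab (bl : α → Option (ι × Fin d)) (x : α) : (ι × Fin d) ⊕ α :=
  (bl x).elim (Sum.inr x) Sum.inl

/-- merged label -/
def mrg (bl : α → Option (ι × Fin d)) (x : α) : ι ⊕ α :=
  (bl x).elim (Sum.inr x) (fun p => Sum.inl p.1)

lemma lab_eq_inl {bl : α → Option (ι × Fin d)} {x : α} {p : ι × Fin d} :
    lab bl x = Sum.inl p ↔ bl x = some p := by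
  cases h : bl x <;> simp [lab, h]

lemma lab_eq_inr {bl : α → Option (ι × Fin d)} {x y : α} :
    lab bl x = Sum.inr y ↔ bl x = none ∧ x = y := by
  cases h : bl x <;> simp [lab, h]

lemma mrg_eq_inl {bl : α → Option (ι × Fin d)} {x : α} {k : ι} :
    mrg bl x = Sum.inl k ↔ ∃ r, bl x = some (k, r) := by
  cases h : bl x with
  | none => simp [mrg, h]
  | some p => simp [mrg, h, Prod.ext_iff, eq_comm (a := k)]

lemma mrg_eq_inr {bl : α → Option (ι × Fin d)} {x y : α} :
    mrg bl x = Sum.inr y ↔ bl x = none ∧ x = y := by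
  cases h : bl x <;> simp [mrg, h]

lemma mrg_from_lab (bl : α → Option (ι × Fin d)) (x : α) :
    mrg bl x = Sum.elim (fun p => Sum.inl p.1) Sum.inr (lab bl x) := by
  cases h : bl x <;> simp [mrg, lab, h]

/-- the sortedness condition on a permutation (viewed as positions → elements) -/
def Srt (bl : α → Option (ι × Fin d)) (σ : Equiv.Perm α) : Prop :=
  ∀ p q : α, ∀ k : ι, ∀ r r' : Fin d,
    bl (σ p) = some (k, r) → bl (σ q) = some (k, r') → r < r' → p < q

instance {bl : α → Option (ι × Fin d)} : DecidablePred (Srt bl) := fun σ => by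
  unfold Srt; infer_instance

lemma filter_comp_perm (σ : Equiv.Perm α) (P : α → Prop) [DecidablePred P] :
    (Finset.univ.filter fun q => P (σ q)).card = (Finset.univ.filter fun x => P x).card := by
  apply Finset.card_nbij (fun q => σ q)
  · intro q hq
    simp only [Finset.mem_coe, Finset.mem_filter, Finset.mem_univ, true_and] at hq ⊢
    exact hq
  · intro a _ b _ hab; exact σ.injective hab
  · intro x hx
    simp only [Finset.coe_filter, Set.mem_setOf_eq, Finset.mem_univ, true_and] at hx ⊢
    exact ⟨σ.symm x, by simpa using hx, by simp⟩

lemma countB (hd : 0 < d) (bl : α → Option (ι × Fin d)) :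
    (Finset.univ.filter fun σ : Equiv.Perm α => Srt bl σ).card
      * ∏ k : ι, (Finset.univ.filter fun x => ∃ r, bl x = some (k, r)).card.factorial
    = (Fintype.card α).factorial
      * ∏ k : ι, ∏ r : Fin d, (Finset.univ.filter fun x => bl x = some (k, r)).card.factorial := by
  classical
  set a : ι → Fin d → ℕ := fun k r => (Finset.univ.filter fun x => bl x = some (k, r)).card
    with ha
  set w : ι → ℕ := fun k => (Finset.univ.filter fun x => ∃ r, bl x = some (k, r)).card with hw
  set φ : Equiv.Perm α → (α → ι ⊕ α) := fun σ => mrg bl ∘ σ with hφ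
  -- fiber of φ over the image point of σ₀, unrestricted
  have fiber_full : ∀ σ₀ : Equiv.Perm α,
      (Finset.univ.filter fun σ : Equiv.Perm α => φ σ = φ σ₀).card
        = ∏ k : ι, (w k).factorial := by
    intro σ₀
    rw [hφ]
    have := card_coset (mrg bl) σ₀
    rw [this, Fintype.prod_sum_type]
    have h2 : ∀ x : α, (Finset.univ.filter fun y => mrg bl y = Sum.inr x).card.factorial = 1 := by
      intro x
      have hsub : (Finset.univ.filter fun y => mrg bl y = Sum.inr x) ⊆ {x} := by
        intro y hy
        simp only [Finset.mem_filter, Finset.mem_univ, true_and, mrg_eq_inr] at hy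
        simp [hy.2]
      have := Finset.card_le_card hsub
      simp only [Finset.card_singleton] at this
      interval_cases h : (Finset.univ.filter fun y => mrg bl y = Sum.inr x).card <;> simp
    have h3 : ∏ x : α, (Finset.univ.filter fun y => mrg bl y = Sum.inr x).card.factorial = 1 :=
      Finset.prod_eq_one (fun x _ => h2 x)
    rw [h3, mul_one]
    refine Finset.prod_congr rfl (fun k _ => ?_)
    congr 1
    rw [hw]
    congr 1
    ext x
    simp [mrg_eq_inl]
  -- step A
  have stepA : (Fintype.card α).factorial
      = (Finset.univ.image φ).card * ∏ k : ι, (w k).factorial := by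
    have h0 : (Finset.univ : Finset (Equiv.Perm α)).card
        = ∑ h ∈ Finset.univ.image φ, ((Finset.univ : Finset (Equiv.Perm α)).filter
            (fun σ => φ σ = h)).card :=
      Finset.card_eq_sum_card_fiberwise (fun σ _ => Finset.mem_image_of_mem φ (Finset.mem_univ σ))
    have h1 : ∀ h ∈ Finset.univ.image φ, ((Finset.univ : Finset (Equiv.Perm α)).filter
        (fun σ => φ σ = h)).card = ∏ k : ι, (w k).factorial := by
      intro h hh
      obtain ⟨σ₀, _, rfl⟩ := Finset.mem_image.mp hh
      exact fiber_full σ₀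
    rw [← Fintype.card_perm, ← Finset.card_univ, h0, Finset.sum_congr rfl h1,
      Finset.sum_const, smul_eq_mul]
  -- the filtered set
  have fiber_B : ∀ σ₀ : Equiv.Perm α, Srt bl σ₀ →
      ((Finset.univ.filter fun σ : Equiv.Perm α => Srt bl σ).filter fun σ => φ σ = φ σ₀).card
        = ∏ k : ι, ∏ r : Fin d, (a k r).factorial := by
    intro σ₀ hσ₀
    have hset : ((Finset.univ.filter fun σ : Equiv.Perm α => Srt bl σ).filter
          fun σ => φ σ = φ σ₀)
        = Finset.univ.filter (fun σ : Equiv.Perm α => lab bl ∘ σ = lab bl ∘ σ₀) := by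
      ext σ
      simp only [Finset.mem_filter, Finset.mem_univ, true_and]
      constructor
      · rintro ⟨hs, hp⟩
        funext p
        simp only [Function.comp_apply]
        have hmer : ∀ q : α, mrg bl (σ q) = mrg bl (σ₀ q) := fun q => congrFun hp q
        cases hbp : bl (σ p) with
        | none =>
          have h1 : mrg bl (σ p) = Sum.inr (σ p) := mrg_eq_inr.mpr ⟨hbp, rfl⟩
          have h2 : mrg bl (σ₀ p) = Sum.inr (σ p) := (hmer p) ▸ h1
          obtain ⟨hb0, heq⟩ := mrg_eq_inr.mp h2
          rw [lab_eq_inr.mpr ⟨hbp, rfl⟩, lab_eq_inr.mpr ⟨hb0, rfl⟩, heq]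
        | some pr =>
          obtain ⟨k, r⟩ := pr
          have h1 : mrg bl (σ p) = Sum.inl k := mrg_eq_inl.mpr ⟨r, hbp⟩
          have h2 : mrg bl (σ₀ p) = Sum.inl k := (hmer p) ▸ h1
          obtain ⟨r', hbp'⟩ := mrg_eq_inl.mp h2
          -- use mono_eq on the group of k
          set Pk : Finset α := Finset.univ.filter (fun q => mrg bl (σ q) = Sum.inl k) with hPk
          set f : α → Fin d := fun q => ((bl (σ q)).map Prod.snd).getD ⟨0, hd⟩ with hf
          set g : α → Fin d := fun q => ((bl (σ₀ q)).map Prod.snd).getD ⟨0, hd⟩ with hg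
          have hmem : ∀ q ∈ Pk, ∃ rq, bl (σ q) = some (k, rq) := by
            intro q hq
            simp only [hPk, Finset.mem_filter, Finset.mem_univ, true_and] at hq
            exact mrg_eq_inl.mp hq
          have hmem' : ∀ q ∈ Pk, ∃ rq, bl (σ₀ q) = some (k, rq) := by
            intro q hq
            simp only [hPk, Finset.mem_filter, Finset.mem_univ, true_and] at hq
            rw [hmer q] at hq
            exact mrg_eq_inl.mp hq
          have hfmono : ∀ x ∈ Pk, ∀ y ∈ Pk, x ≤ y → f x ≤ f y := by
            intro x hx y hy hxy
            obtain ⟨rx, hbx⟩ := hmem x hx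
            obtain ⟨ry, hby⟩ := hmem y hy
            simp only [hf, hbx, hby, Option.map_some, Option.getD_some]
            by_contra hcon
            push_neg at hcon
            exact absurd (hs y x k ry rx hby hbx hcon) (not_lt.mpr hxy)
          have hgmono : ∀ x ∈ Pk, ∀ y ∈ Pk, x ≤ y → g x ≤ g y := by
            intro x hx y hy hxy
            obtain ⟨rx, hbx⟩ := hmem' x hx
            obtain ⟨ry, hby⟩ := hmem' y hy
            simp only [hg, hbx, hby, Option.map_some, Option.getD_some]
            by_contra hcon
            push_neg at hcon
            exact absurd (hσ₀ y x k ry rx hby hbx hcon) (not_lt.mpr hxy)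
          have hfib : ∀ ρ : Fin d, (Pk.filter (fun x => f x = ρ)).card
              = (Pk.filter (fun x => g x = ρ)).card := by
            intro ρ
            have e1 : Pk.filter (fun x => f x = ρ)
                = Finset.univ.filter (fun q => bl (σ q) = some (k, ρ)) := by
              ext q
              simp only [Finset.mem_filter, Finset.mem_univ, true_and, hPk]
              constructor
              · rintro ⟨hq, hfq⟩
                obtain ⟨rq, hbq⟩ := mrg_eq_inl.mp hq
                simp only [hf, hbq, Option.map_some, Option.getD_some] at hfq
                rw [hbq, hfq]
              · intro hbq
                refine ⟨mrg_eq_inl.mpr ⟨ρ, hbq⟩, ?_⟩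
                simp [hf, hbq]
            have e2 : Pk.filter (fun x => g x = ρ)
                = Finset.univ.filter (fun q => bl (σ₀ q) = some (k, ρ)) := by
              ext q
              simp only [Finset.mem_filter, Finset.mem_univ, true_and, hPk]
              constructor
              · rintro ⟨hq, hgq⟩
                rw [hmer q] at hq
                obtain ⟨rq, hbq⟩ := mrg_eq_inl.mp hq
                simp only [hg, hbq, Option.map_some, Option.getD_some] at hgq
                rw [hbq, hgq]
              · intro hbq
                refine ⟨?_, by simp [hg, hbq]⟩
                rw [hmer q]
                exact mrg_eq_inl.mpr ⟨ρ, hbq⟩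
            rw [e1, e2, filter_comp_perm σ (fun x => bl x = some (k, ρ)),
              filter_comp_perm σ₀ (fun x => bl x = some (k, ρ))]
          have hpPk : p ∈ Pk := by
            simp only [hPk, Finset.mem_filter, Finset.mem_univ, true_and]
            exact h1
          have := mono_eq hfmono hgmono hfib p hpPk
          simp only [hf, hg, hbp, hbp', Option.map_some, Option.getD_some] at this
          rw [lab_eq_inl.mpr hbp, lab_eq_inl.mpr hbp', this]
      · intro hlab
        have hbl : ∀ x : α, bl (σ x) = bl (σ₀ x) := by
          intro x
          have hx := congrFun hlab x
          simp only [Function.comp_apply] at hx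
          cases hb : bl (σ₀ x) with
          | none =>
            have : lab bl (σ₀ x) = Sum.inr (σ₀ x) := lab_eq_inr.mpr ⟨hb, rfl⟩
            rw [this] at hx
            exact (lab_eq_inr.mp hx).1.trans rfl
          | some pr =>
            have : lab bl (σ₀ x) = Sum.inl pr := lab_eq_inl.mpr hb
            rw [this] at hx
            exact lab_eq_inl.mp hx
        constructor
        · intro p q k r r' hbp hbq hrr
          exact hσ₀ p q k r r' ((hbl p) ▸ hbp) ((hbl q) ▸ hbq) hrr
        · funext x
          have hx := congrFun hlab x
          simp only [Function.comp_apply] at hx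
          simp only [hφ, Function.comp_apply, mrg_from_lab, hx]
    rw [hset, card_coset (lab bl) σ₀, Fintype.prod_sum_type]
    have h2 : ∀ x : α, (Finset.univ.filter fun y => lab bl y = Sum.inr x).card.factorial = 1 := by
      intro x
      have hsub : (Finset.univ.filter fun y => lab bl y = Sum.inr x) ⊆ {x} := by
        intro y hy
        simp only [Finset.mem_filter, Finset.mem_univ, true_and, lab_eq_inr] at hy
        simp [hy.2]
      have := Finset.card_le_card hsub
      simp only [Finset.card_singleton] at this
      interval_cases h : (Finset.univ.filter fun y => lab bl y = Sum.inr x).card <;> simp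
    rw [Finset.prod_eq_one (fun x _ => h2 x), mul_one, Fintype.prod_prod_type]
    refine Finset.prod_congr rfl (fun k _ => Finset.prod_congr rfl (fun r _ => ?_))
    congr 1
    rw [ha]
    congr 1
    ext x
    simp [lab_eq_inl]
  -- step B : counting the sorted permutations fiberwise
  have stepB : (Finset.univ.filter fun σ : Equiv.Perm α => Srt bl σ).card
      = (((Finset.univ.filter fun σ : Equiv.Perm α => Srt bl σ)).image φ).card
          * ∏ k : ι, ∏ r : Fin d, (a k r).factorial := by
    have h0 : (Finset.univ.filter fun σ : Equiv.Perm α => Srt bl σ).card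
        = ∑ h ∈ (Finset.univ.filter fun σ : Equiv.Perm α => Srt bl σ).image φ,
            ((Finset.univ.filter fun σ : Equiv.Perm α => Srt bl σ).filter
              (fun σ => φ σ = h)).card :=
      Finset.card_eq_sum_card_fiberwise (fun σ hσ => Finset.mem_image_of_mem φ hσ)
    rw [h0]
    have h1 : ∀ h ∈ (Finset.univ.filter fun σ : Equiv.Perm α => Srt bl σ).image φ,
        ((Finset.univ.filter fun σ : Equiv.Perm α => Srt bl σ).filter (fun σ => φ σ = h)).card
          = ∏ k : ι, ∏ r : Fin d, (a k r).factorial := by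
      intro h hh
      obtain ⟨σ₀, hσ₀, rfl⟩ := Finset.mem_image.mp hh
      simp only [Finset.mem_filter, Finset.mem_univ, true_and] at hσ₀
      exact fiber_B σ₀ hσ₀
    rw [Finset.sum_congr rfl h1, Finset.sum_const, smul_eq_mul]
  -- step C: every merged pattern is attained by a sorted permutation
  have stepC : ((Finset.univ.filter fun σ : Equiv.Perm α => Srt bl σ)).image φ
      = Finset.univ.image φ := by
    apply Finset.Subset.antisymm (Finset.image_subset_image (Finset.filter_subset _ _))
    intro h hh
    obtain ⟨σ₁, -, rfl⟩ := Finset.mem_image.mp hh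
    set Pk : ι → Finset α := fun k => Finset.univ.filter (fun q => φ σ₁ q = Sum.inl k)
      with hPkdef
    have hPkcard : ∀ k, (Pk k).card = w k := by
      intro k
      rw [hPkdef]
      simp only [hφ, Function.comp_apply]
      rw [filter_comp_perm σ₁ (fun x => mrg bl x = Sum.inl k), hw]
      congr 1
      ext x
      simp [mrg_eq_inl]
    have hwlo : ∀ k, (Pk k).card = lo (a k) d := by
      intro k
      rw [hPkcard k, lo_top, hw]
      show (Finset.univ.filter fun x => ∃ r, bl x = some (k, r)).card = ∑ r : Fin d, a k r
      have h0 : (Finset.univ.filter fun x => ∃ r, bl x = some (k, r)).card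
          = ∑ r : Fin d, ((Finset.univ.filter fun x => ∃ r, bl x = some (k, r)).filter
              (fun x => ((bl x).map Prod.snd).getD ⟨0, hd⟩ = r)).card :=
        Finset.card_eq_sum_card_fiberwise (fun x _ => Finset.mem_univ _)
      rw [h0]
      refine Finset.sum_congr rfl (fun r _ => ?_)
      rw [ha]
      congr 1
      ext x
      simp only [Finset.filter_filter, Finset.mem_filter, Finset.mem_univ, true_and]
      constructor
      · rintro ⟨⟨r', hb⟩, hr⟩
        simp only [hb, Option.map_some, Option.getD_some] at hr
        rw [hb, hr]
      · intro hb
        exact ⟨⟨r, hb⟩, by simp [hb]⟩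
    set H : α → (ι × Fin d) ⊕ α := fun p =>
      Sum.elim (fun k => Sum.inl (k, chunk hd (a k) (rk (Pk k) p))) Sum.inr (φ σ₁ p) with hH
    have hH1 : ∀ p k r, H p = Sum.inl (k, r) ↔
        (φ σ₁ p = Sum.inl k ∧ chunk hd (a k) (rk (Pk k) p) = r) := by
      intro p k r
      cases hc : φ σ₁ p with
      | inl k' =>
        simp only [hH, hc, Sum.elim_inl, Sum.inl.injEq, Prod.mk.injEq]
        constructor
        · rintro ⟨rfl, h⟩; exact ⟨rfl, h⟩
        · rintro ⟨rfl, h⟩; exact ⟨rfl, h⟩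
      | inr y => simp [hH, hc]
    have hH2 : ∀ p y, H p = Sum.inr y ↔ φ σ₁ p = Sum.inr y := by
      intro p y
      cases hc : φ σ₁ p <;> simp [hH, hc]
    have hfibH : ∀ b, (Finset.univ.filter fun x => lab bl x = b).card
        = (Finset.univ.filter fun p => H p = b).card := by
      intro b
      cases b with
      | inl pr =>
        obtain ⟨k, r⟩ := pr
        have hL : (Finset.univ.filter fun x => lab bl x = Sum.inl (k, r)).card = a k r := by
          rw [ha]
          congr 1
          ext x
          simp [lab_eq_inl]
        have hR : (Finset.univ.filter fun p => H p = Sum.inl (k, r))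
            = (Pk k).filter (fun p => lo (a k) (r : ℕ) ≤ rk (Pk k) p
                ∧ rk (Pk k) p < lo (a k) ((r : ℕ) + 1)) := by
          ext p
          simp only [Finset.mem_filter, Finset.mem_univ, true_and]
          rw [hH1 p k r]
          constructor
          · rintro ⟨h1, h2⟩
            have hpPk : p ∈ Pk k := by
              rw [hPkdef]
              simp only [Finset.mem_filter, Finset.mem_univ, true_and]
              exact h1
            have hrk : rk (Pk k) p < lo (a k) d := by
              rw [← hwlo k]; exact rk_lt_card hpPk
            exact ⟨hpPk, (chunk_eq_iff hd (a k) hrk r).mp h2⟩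
          · rintro ⟨hpPk, hc⟩
            have h1 : φ σ₁ p = Sum.inl k := by
              rw [hPkdef] at hpPk
              simpa using hpPk
            have hrk : rk (Pk k) p < lo (a k) d := by
              rw [← hwlo k]; exact rk_lt_card hpPk
            exact ⟨h1, (chunk_eq_iff hd (a k) hrk r).mpr hc⟩
        have hcle : lo (a k) ((r : ℕ) + 1) ≤ (Pk k).card := by
          rw [hwlo k]
          exact lo_mono (a k) (by have := r.isLt; omega)
        rw [hL, hR, rk_count _ _ _ hcle, lo_succ]
        omega
      | inr y =>
        have hL : (Finset.univ.filter fun x => lab bl x = Sum.inr y)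
            = (Finset.univ.filter fun x => mrg bl x = Sum.inr y) := by
          ext x
          simp [lab_eq_inr, mrg_eq_inr]
        have hR : (Finset.univ.filter fun p => H p = Sum.inr y)
            = (Finset.univ.filter fun p => mrg bl (σ₁ p) = Sum.inr y) := by
          ext p
          simp only [Finset.mem_filter, Finset.mem_univ, true_and]
          rw [hH2 p y]
          rfl
        rw [hL, hR, filter_comp_perm σ₁ (fun x => mrg bl x = Sum.inr y)]
    obtain ⟨σ₀, hσ₀⟩ := exists_comp_eq (lab bl) H hfibH
    have hlabeq : ∀ p, lab bl (σ₀ p) = H p := fun p => congrFun hσ₀ p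
    have hSrt : Srt bl σ₀ := by
      intro p q k r r' hbp hbq hrr
      have h1 : H p = Sum.inl (k, r) := (hlabeq p) ▸ lab_eq_inl.mpr hbp
      have h2 : H q = Sum.inl (k, r') := (hlabeq q) ▸ lab_eq_inl.mpr hbq
      rw [hH1] at h1 h2
      by_contra hcon
      push_neg at hcon
      have hle : rk (Pk k) q ≤ rk (Pk k) p := rk_mono _ hcon
      have := chunk_mono hd (a k) hle
      rw [h1.2, h2.2] at this
      exact absurd hrr (not_lt.mpr this)
    have hφeq : φ σ₀ = φ σ₁ := by
      funext p
      have hgoal : mrg bl (σ₀ p) = mrg bl (σ₁ p) := by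
        rw [mrg_from_lab, hlabeq p]
        cases hc : φ σ₁ p with
        | inl k =>
          have hc' : mrg bl (σ₁ p) = Sum.inl k := hc
          simp [hH, hc, hc']
        | inr y =>
          have hc' : mrg bl (σ₁ p) = Sum.inr y := hc
          simp [hH, hc, hc']
      exact hgoal
    exact Finset.mem_image.mpr
      ⟨σ₀, Finset.mem_filter.mpr ⟨Finset.mem_univ _, hSrt⟩, hφeq⟩
  rw [stepB, stepC, stepA]
  ring



end Count


lemma card_monotone_fin (s d : ℕ) :
    Fintype.card {f : Fin s → Fin d // Monotone f} = (d + s - 1).choose s := by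
  have e : {f : Fin s → Fin d // Monotone f} ≃ Sym (Fin d) s := by
    refine
      { toFun := fun f => ⟨↑(List.ofFn f.1), by simp⟩
        invFun := fun m =>
          ⟨fun i => (m.1.sort (· ≤ ·)).get ⟨i.1, by
              rw [Multiset.length_sort, m.2]; exact i.2⟩, ?_⟩
        left_inv := ?_
        right_inv := ?_ }
    · -- monotone
      intro i j hij
      exact List.Pairwise.rel_get_of_le (Multiset.pairwise_sort _ _) hij
    · rintro ⟨f, hf⟩
      ext i
      simp only
      have hsorted : (List.ofFn f).Pairwise (· ≤ ·) := List.pairwise_ofFn.mpr (fun i j hij => hf hij.le)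
      have hperm : (Multiset.sort (↑(List.ofFn f)) (· ≤ ·)).Perm (List.ofFn f) := by
        rw [← Multiset.coe_eq_coe]
        exact Multiset.sort_eq _ _
      have heq : Multiset.sort (↑(List.ofFn f)) (· ≤ ·) = List.ofFn f :=
        List.Perm.eq_of_pairwise' (Multiset.pairwise_sort _ _) hsorted hperm
      rw [List.get_of_eq heq, List.get_ofFn]
      congr 1
    · rintro ⟨m, hm⟩
      ext1
      simp only
      have hlen : (Multiset.sort m (· ≤ ·)).length = s := by
        rw [Multiset.length_sort, hm]
      have : List.ofFn (fun i : Fin s => (Multiset.sort m (· ≤ ·)).get ⟨i.1, by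
          rw [hlen]; exact i.2⟩) = Multiset.sort m (· ≤ ·) := by
        apply List.ext_get
        · simp [hlen]
        · intro j h1 h2
          rw [List.get_ofFn]
          congr 1
      exact (congrArg (fun l : List (Fin d) => (↑l : Multiset (Fin d))) this).trans
        (Multiset.sort_eq _ _)
  rw [Fintype.card_congr e, Sym.card_sym_eq_choose, Fintype.card_fin]

lemma card_monotone (β : Type*) [Fintype β] [LinearOrder β] (d : ℕ) :
    Fintype.card {f : β → Fin d // Monotone f}
      = (Fintype.card β + d - 1).choose (Fintype.card β) := by
  set s := Fintype.card β with hs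
  set iso := monoEquivOfFin β hs.symm with hiso
  have e2 : {f : β → Fin d // Monotone f} ≃ {g : Fin s → Fin d // Monotone g} :=
    { toFun := fun f => ⟨f.1 ∘ iso, f.2.comp iso.monotone⟩
      invFun := fun g => ⟨g.1 ∘ iso.symm, g.2.comp iso.symm.monotone⟩
      left_inv := by
        rintro ⟨f, hf⟩
        ext x
        simp
      right_inv := by
        rintro ⟨g, hg⟩
        ext i
        simp }
  rw [Fintype.card_congr e2, card_monotone_fin]
  congr 1
  omega


lemma pi_cast_apply {e d : ℕ} {γ : Type*} (Pos : Fin e → Finset γ)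
    (g : ∀ k, {p // p ∈ Pos k} → Fin d) {k k' : Fin e} (h : k = k') (p : γ)
    (h1 : p ∈ Pos k) (h2 : p ∈ Pos k') : g k ⟨p, h1⟩ = g k' ⟨p, h2⟩ := by subst h; rfl

lemma card_filter_coe (S : Finset ℕ) (P : ℕ → Prop) [DecidablePred P] :
    (Finset.univ.filter fun x : {x // x ∈ S} => P ↑x).card = (S.filter P).card := by
  rw [Finset.univ_eq_attach, Finset.filter_attach]
  simp

lemma card_filter_monotone {γ : Type*} [LinearOrder γ] (P : Finset γ) (d : ℕ) :
    (Finset.univ.filter fun g : {p // p ∈ P} → Fin d => Monotone g).card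
      = (P.card + d - 1).choose P.card := by
  rw [← Fintype.card_subtype]
  convert card_monotone {p // p ∈ P} d using 2 <;> simp

end SBP

/-- **Theorem (skew Bollobás systems over a partitioned ground set).**
Let `d ≥ 2` and suppose `[n]` is the disjoint union of sets `X_1, …, X_e`.
Let `{(A_i^{(1)}, …, A_i^{(d)})}_{1 ≤ i ≤ m}` be a skew Bollobás system of
`d`-partitions of `[n]`, `S = ⋃_i ⋃_r A_i^{(r)}` and `s_k = |S ∩ X_k|`. Then
`∑_i (∏_k multinomial(|A_i^{(1)} ∩ X_k|, …, |A_i^{(d)} ∩ X_k|))⁻¹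
  ≤ ∏_k C(s_k + d - 1, d - 1)`. -/
theorem skew_bollobas_partitioned (n d e m : ℕ) (hd : 2 ≤ d)
    (X : Fin e → Finset ℕ)
    (hXdisj : ∀ k l : Fin e, k ≠ l → Disjoint (X k) (X l))
    (hXcover : Finset.univ.biUnion X = Finset.Icc 1 n)
    (A : Fin m → Fin d → Finset ℕ)
    (hAsub : ∀ i r, A i r ⊆ Finset.Icc 1 n)
    (hAdisj : ∀ i, ∀ p q : Fin d, p ≠ q → Disjoint (A i p) (A i q))
    (hskew : ∀ i j : Fin m, i < j →
      ∃ p q : Fin d, p < q ∧ ((A i p) ∩ (A j q)).Nonempty) :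
    ∑ i : Fin m, (∏ k : Fin e,
        ((Nat.multinomial Finset.univ
          fun r : Fin d => ((A i r) ∩ X k).card : ℕ) : ℚ))⁻¹
      ≤ ∏ k : Fin e,
          (((((Finset.univ.biUnion fun i : Fin m =>
                Finset.univ.biUnion fun r : Fin d => A i r) ∩ X k).card
              + d - 1).choose (d - 1) : ℕ) : ℚ) := by
  classical
  have hd0 : 0 < d := by omega
  set S : Finset ℕ := (Finset.univ.biUnion fun i : Fin m =>
    Finset.univ.biUnion fun r : Fin d => A i r) with hS
  have hAS : ∀ i r x, x ∈ A i r → x ∈ S := by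
    intro i r x hx
    rw [hS]
    simp only [Finset.mem_biUnion, Finset.mem_univ, true_and]
    exact ⟨i, r, hx⟩
  have hSX : ∀ x, x ∈ S → ∃ k, x ∈ X k := by
    intro x hx
    rw [hS] at hx
    simp only [Finset.mem_biUnion, Finset.mem_univ, true_and] at hx
    obtain ⟨i, r, hx⟩ := hx
    have h2 : x ∈ Finset.univ.biUnion X := by
      rw [hXcover]
      exact hAsub i r hx
    simpa [Finset.mem_biUnion] using h2
  -- the group of an element
  have hkex : ∀ x : {x // x ∈ S}, (Finset.univ.filter fun k => (x : ℕ) ∈ X k).Nonempty := by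
    intro x
    obtain ⟨k, hk⟩ := hSX x x.2
    exact ⟨k, by simp [hk]⟩
  set kOf : {x // x ∈ S} → Fin e := fun x =>
    (Finset.univ.filter fun k => (x : ℕ) ∈ X k).min' (hkex x) with hkOf
  have kOf_mem : ∀ x, (x : ℕ) ∈ X (kOf x) := by
    intro x
    have h := Finset.min'_mem _ (hkex x)
    simpa [hkOf] using h
  have kOf_eq : ∀ (x : {x // x ∈ S}) (k : Fin e), (x : ℕ) ∈ X k → kOf x = k := by
    intro x k hk
    by_contra hne
    exact Finset.disjoint_left.mp (hXdisj _ _ hne) (kOf_mem x) hk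
  -- the block label
  set bl : Fin m → {x // x ∈ S} → Option (Fin e × Fin d) := fun i x =>
    if h : ∃ r, (x : ℕ) ∈ A i r then
      some (kOf x, (Finset.univ.filter fun r => (x : ℕ) ∈ A i r).min'
        (by obtain ⟨r, hr⟩ := h; exact ⟨r, by simp [hr]⟩))
    else none with hbl
  have bl_some : ∀ i x k r, bl i x = some (k, r) ↔ ((x : ℕ) ∈ X k ∧ (x : ℕ) ∈ A i r) := by
    intro i x k r
    rw [hbl]
    by_cases hex : ∃ r', (x : ℕ) ∈ A i r'
    · simp only [dif_pos hex, Option.some.injEq, Prod.mk.injEq]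
      constructor
      · rintro ⟨rfl, rfl⟩
        refine ⟨kOf_mem x, ?_⟩
        have := Finset.min'_mem (Finset.univ.filter fun r => (x : ℕ) ∈ A i r)
          (by obtain ⟨r', hr'⟩ := hex; exact ⟨r', by simp [hr']⟩)
        simpa using this
      · rintro ⟨hXk, hAr⟩
        refine ⟨kOf_eq x k hXk, ?_⟩
        have hmm := Finset.min'_mem (Finset.univ.filter fun r => (x : ℕ) ∈ A i r)
          (by obtain ⟨r', hr'⟩ := hex; exact ⟨r', by simp [hr']⟩)
        simp only [Finset.mem_filter, Finset.mem_univ, true_and] at hmm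
        by_contra hne
        exact Finset.disjoint_left.mp (hAdisj i _ r hne) hmm hAr
    · simp only [dif_neg hex]
      push_neg at hex
      constructor
      · intro h
        exact absurd h (by simp)
      · rintro ⟨h1, h2⟩
        exact absurd h2 (hex r)
  -- the per-i counting identity
  set Bc : Fin m → ℕ := fun i =>
    (Finset.univ.filter fun σ : Equiv.Perm {x // x ∈ S} => SBP.Srt (bl i) σ).card with hBc
  have card_a : ∀ i k r,
      (Finset.univ.filter fun x : {x // x ∈ S} => bl i x = some (k, r)).card
        = ((A i r) ∩ X k).card := by
    intro i k r
    have h1 : (Finset.univ.filter fun x : {x // x ∈ S} => bl i x = some (k, r))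
        = Finset.univ.filter (fun x : {x // x ∈ S} => (fun y => y ∈ A i r ∩ X k) ↑x) := by
      ext x
      simp only [Finset.mem_filter, Finset.mem_univ, true_and, bl_some, Finset.mem_inter]
      tauto
    rw [h1, SBP.card_filter_coe S (fun y => y ∈ A i r ∩ X k)]
    congr 1
    ext x
    simp only [Finset.mem_filter, Finset.mem_inter]
    constructor
    · rintro ⟨-, h⟩
      exact h
    · rintro ⟨h1, h2⟩
      exact ⟨hAS i r x h1, h1, h2⟩
  have card_w : ∀ i k,
      (Finset.univ.filter fun x : {x // x ∈ S} => ∃ r, bl i x = some (k, r)).card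
        = ∑ r : Fin d, ((A i r) ∩ X k).card := by
    intro i k
    have h1 : (Finset.univ.filter fun x : {x // x ∈ S} => ∃ r, bl i x = some (k, r))
        = Finset.univ.filter
            (fun x : {x // x ∈ S} =>
              (fun y => y ∈ Finset.univ.biUnion (fun r => A i r ∩ X k)) ↑x) := by
      ext x
      simp only [Finset.mem_filter, Finset.mem_univ, true_and, bl_some,
        Finset.mem_biUnion, Finset.mem_inter]
      tauto
    rw [h1, SBP.card_filter_coe S (fun y => y ∈ Finset.univ.biUnion (fun r => A i r ∩ X k))]
    have h2 : (S.filter (fun x => x ∈ Finset.univ.biUnion (fun r => A i r ∩ X k)))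
        = Finset.univ.biUnion (fun r => A i r ∩ X k) := by
      ext x
      simp only [Finset.mem_filter, Finset.mem_biUnion, Finset.mem_univ, true_and,
        Finset.mem_inter]
      constructor
      · rintro ⟨-, h⟩
        exact h
      · rintro ⟨r, hr, hxk⟩
        exact ⟨hAS i r x hr, r, hr, hxk⟩
    have hdisj : ∀ p ∈ (Finset.univ : Finset (Fin d)), ∀ q ∈ Finset.univ, p ≠ q →
        Disjoint (A i p ∩ X k) (A i q ∩ X k) := by
      intro p _ q _ hpq
      exact Finset.disjoint_left.mpr (fun x hx1 hx2 =>
        Finset.disjoint_left.mp (hAdisj i p q hpq) (Finset.mem_inter.mp hx1).1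
          (Finset.mem_inter.mp hx2).1)
    rw [h2, Finset.card_biUnion hdisj]
  -- the key counting identity per i
  have key1 : ∀ i, Bc i * ∏ k : Fin e,
      (Nat.multinomial Finset.univ fun r : Fin d => ((A i r) ∩ X k).card) = S.card.factorial := by
    intro i
    have h := SBP.countB (α := {x // x ∈ S}) hd0 (bl i)
    rw [Fintype.card_coe] at h
    have hwfac : ∀ k, (Finset.univ.filter fun x : {x // x ∈ S} =>
        ∃ r, bl i x = some (k, r)).card.factorial
        = (∏ r : Fin d, ((A i r) ∩ X k).card.factorial)
            * (Nat.multinomial Finset.univ fun r : Fin d => ((A i r) ∩ X k).card) := by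
      intro k
      rw [card_w i k, ← Nat.multinomial_spec]
    have ha' : ∀ k, ∏ r : Fin d,
        (Finset.univ.filter fun x : {x // x ∈ S} => bl i x = some (k, r)).card.factorial
        = ∏ r : Fin d, ((A i r) ∩ X k).card.factorial := by
      intro k
      exact Finset.prod_congr rfl (fun r _ => by rw [card_a i k r])
    rw [Finset.prod_congr rfl (fun k _ => hwfac k), Finset.prod_congr rfl (fun k _ => ha' k),
      Finset.prod_mul_distrib] at h
    have hpos : 0 < ∏ k : Fin e, ∏ r : Fin d, ((A i r) ∩ X k).card.factorial :=
      Finset.prod_pos (fun k _ => Finset.prod_pos (fun r _ => Nat.factorial_pos _))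
    apply Nat.eq_of_mul_eq_mul_right hpos
    calc (Bc i * ∏ k : Fin e,
          (Nat.multinomial Finset.univ fun r : Fin d => ((A i r) ∩ X k).card))
          * (∏ k : Fin e, ∏ r : Fin d, ((A i r) ∩ X k).card.factorial)
        = Bc i * ((∏ k : Fin e, ∏ r : Fin d, ((A i r) ∩ X k).card.factorial)
            * ∏ k : Fin e,
              (Nat.multinomial Finset.univ fun r : Fin d => ((A i r) ∩ X k).card)) := by ring
      _ = S.card.factorial * ∏ k : Fin e, ∏ r : Fin d, ((A i r) ∩ X k).card.factorial := h
  -- step 2 : the per-permutation bound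
  have step2 : ∀ σ : Equiv.Perm {x // x ∈ S},
      (Finset.univ.filter fun i : Fin m => SBP.Srt (bl i) σ).card
        ≤ ∏ k : Fin e, ((S ∩ X k).card + d - 1).choose (d - 1) := by
    intro σ
    set Pos : Fin e → Finset {x // x ∈ S} := fun k =>
      Finset.univ.filter (fun p => kOf (σ p) = k) with hPos
    have hPoscard : ∀ k, (Pos k).card = (S ∩ X k).card := by
      intro k
      rw [hPos]
      rw [SBP.filter_comp_perm σ (fun x => kOf x = k)]
      have h1 : (Finset.univ.filter fun x : {x // x ∈ S} => kOf x = k)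
          = (Finset.univ.filter fun x : {x // x ∈ S} => (x : ℕ) ∈ X k) := by
        ext x
        simp only [Finset.mem_filter, Finset.mem_univ, true_and]
        constructor
        · rintro rfl
          exact kOf_mem x
        · intro hxk
          exact kOf_eq x k hxk
      have h2 : (Finset.univ.filter fun x : {x // x ∈ S} => (x : ℕ) ∈ X k)
          = Finset.univ.filter (fun x : {x // x ∈ S} => (fun y => y ∈ X k) ↑x) := rfl
      rw [h1, h2, SBP.card_filter_coe S (fun y => y ∈ X k)]
      congr 1
    set CutF : Finset ({x // x ∈ S} → Fin d) := Finset.univ.filter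
      (fun c => ∀ p q, kOf (σ p) = kOf (σ q) → p ≤ q → c p ≤ c q) with hCutF
    -- cardinality of the cut set
    have hCutCard : CutF.card = ∏ k : Fin e, ((S ∩ X k).card + d - 1).choose (d - 1) := by
      have hbij : CutF.card = (Fintype.piFinset (fun k : Fin e =>
          Finset.univ.filter fun g : {p // p ∈ Pos k} → Fin d => Monotone g)).card := by
        apply Finset.card_bij (fun c _ => fun k q => c q.1)
        · intro c hc
          simp only [hCutF, Finset.mem_filter, Finset.mem_univ, true_and] at hc
          rw [Fintype.mem_piFinset]
          intro k
          simp only [Finset.mem_filter, Finset.mem_univ, true_and]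
          intro q q' hqq
          have hq := q.2
          have hq' := q'.2
          simp only [hPos, Finset.mem_filter, Finset.mem_univ, true_and] at hq hq'
          exact hc q.1 q'.1 (hq.trans hq'.symm) hqq
        · intro c hc c' hc' hcc
          funext p
          have hp : p ∈ Pos (kOf (σ p)) := by
            simp [hPos]
          exact congrFun (congrFun hcc (kOf (σ p))) ⟨p, hp⟩
        · intro g hg
          rw [Fintype.mem_piFinset] at hg
          refine ⟨fun p => g (kOf (σ p)) ⟨p, by simp [hPos]⟩, ?_, ?_⟩
          · simp only [hCutF, Finset.mem_filter, Finset.mem_univ, true_and]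
            intro p q hk hpq
            have hqmem : q ∈ Pos (kOf (σ p)) := by
              simp [hPos, hk]
            have e1 : g (kOf (σ q)) ⟨q, by simp [hPos]⟩ = g (kOf (σ p)) ⟨q, hqmem⟩ :=
              SBP.pi_cast_apply Pos g hk.symm q _ _
            rw [e1]
            have := hg (kOf (σ p))
            simp only [Finset.mem_filter, Finset.mem_univ, true_and] at this
            exact this (a := ⟨p, by simp [hPos]⟩) (b := ⟨q, hqmem⟩) hpq
          · funext k q
            have hq2 : kOf (σ q.1) = k := by
              have hq := q.2
              simp only [hPos, Finset.mem_filter, Finset.mem_univ, true_and] at hq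
              exact hq
            exact SBP.pi_cast_apply Pos g hq2 q.1 (by simp [hPos]) q.2
      rw [hbij, Fintype.card_piFinset]
      refine Finset.prod_congr rfl (fun k _ => ?_)
      rw [show (Finset.univ.filter fun g : {p // p ∈ Pos k} → Fin d => Monotone g).card
          = ((Pos k).card + d - 1).choose (Pos k).card by
            convert SBP.card_filter_monotone (Pos k) d, hPoscard k]
      have h1 : (S ∩ X k).card ≤ (S ∩ X k).card + d - 1 := by omega
      rw [← Nat.choose_symm h1]
      congr 1
      omega
    -- the injection from sorted indices into cuts
    have hinj : (Finset.univ.filter fun i : Fin m => SBP.Srt (bl i) σ).card ≤ CutF.card := by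
      set r0 : Fin d := ⟨0, hd0⟩ with hr0
      set cut : Fin m → ({x // x ∈ S} → Fin d) := fun i p =>
        (insert r0 (Finset.univ.filter fun r : Fin d =>
          ∃ q, q ≤ p ∧ kOf (σ q) = kOf (σ p) ∧ ((σ q : ℕ) ∈ A i r))).max'
          (Finset.insert_nonempty _ _) with hcut
      have cut_compat : ∀ i, SBP.Srt (bl i) σ → ∀ p r, ((σ p : ℕ) ∈ A i r) → cut i p = r := by
        intro i hi p r hpr
        rw [hcut]
        apply le_antisymm
        · apply Finset.max'_le
          intro y hy
          rcases Finset.mem_insert.mp hy with hy | hy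
          · rw [hy, hr0]
            exact Fin.mk_le_of_le_val (Nat.zero_le _)
          · simp only [Finset.mem_filter, Finset.mem_univ, true_and] at hy
            obtain ⟨q, hqp, hkk, hqA⟩ := hy
            by_contra hry
            push_neg at hry
            have hblp : bl i (σ p) = some (kOf (σ p), r) :=
              (bl_some i (σ p) (kOf (σ p)) r).mpr ⟨kOf_mem (σ p), hpr⟩
            have hblq : bl i (σ q) = some (kOf (σ p), y) :=
              (bl_some i (σ q) (kOf (σ p)) y).mpr ⟨hkk ▸ kOf_mem (σ q), hqA⟩
            have := hi p q (kOf (σ p)) r y hblp hblq hry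
            exact absurd hqp (not_le.mpr this)
        · apply Finset.le_max'
          apply Finset.mem_insert_of_mem
          simp only [Finset.mem_filter, Finset.mem_univ, true_and]
          exact ⟨p, le_refl p, rfl, hpr⟩
      have cut_mem : ∀ i, SBP.Srt (bl i) σ → cut i ∈ CutF := by
        intro i hi
        simp only [hCutF, Finset.mem_filter, Finset.mem_univ, true_and]
        intro p q hk hpq
        rw [hcut]
        apply Finset.max'_subset
        apply Finset.insert_subset_insert
        intro y hy
        simp only [Finset.mem_filter, Finset.mem_univ, true_and] at hy ⊢
        obtain ⟨q', hq', hk', hA'⟩ := hy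
        exact ⟨q', hq'.trans hpq, hk'.trans hk, hA'⟩
      apply Finset.card_le_card_of_injOn cut
      · intro i hi
        simp only [Finset.coe_filter, Set.mem_setOf_eq, Finset.mem_univ, true_and] at hi
        exact cut_mem i hi
      · intro i hi j hj hij
        simp only [Finset.coe_filter, Set.mem_setOf_eq, Finset.mem_univ, true_and] at hi hj
        by_contra hne
        have key : ∀ i' j' : Fin m, i' < j' → SBP.Srt (bl i') σ → SBP.Srt (bl j') σ →
            cut i' = cut j' → False := by
          intro i' j' hlt hi' hj' hcc
          obtain ⟨pp, qq, hppqq, x, hx⟩ := hskew i' j' hlt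
          rw [Finset.mem_inter] at hx
          have hxS : x ∈ S := hAS i' pp x hx.1
          set p := σ.symm ⟨x, hxS⟩ with hp
          have hσp : σ p = ⟨x, hxS⟩ := by
            rw [hp]; simp
          have h1 : cut i' p = pp := cut_compat i' hi' p pp (by rw [hσp]; exact hx.1)
          have h2 : cut j' p = qq := cut_compat j' hj' p qq (by rw [hσp]; exact hx.2)
          rw [hcc] at h1
          rw [h1] at h2
          exact absurd h2 (ne_of_lt hppqq)
        rcases lt_trichotomy i j with h | h | h
        · exact key i j h hi hj hij
        · exact hne h
        · exact key j i h hj hi hij.symm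
    calc (Finset.univ.filter fun i : Fin m => SBP.Srt (bl i) σ).card
        ≤ CutF.card := hinj
      _ = ∏ k : Fin e, ((S ∩ X k).card + d - 1).choose (d - 1) := hCutCard
  -- double counting
  have key2 : ∑ i : Fin m, Bc i
      ≤ S.card.factorial * ∏ k : Fin e, ((S ∩ X k).card + d - 1).choose (d - 1) := by
    have hswap : ∑ i : Fin m, Bc i = ∑ σ : Equiv.Perm {x // x ∈ S},
        (Finset.univ.filter fun i : Fin m => SBP.Srt (bl i) σ).card := by
      simp only [hBc, Finset.card_filter]
      rw [Finset.sum_comm]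
    rw [hswap]
    calc ∑ σ : Equiv.Perm {x // x ∈ S},
          (Finset.univ.filter fun i : Fin m => SBP.Srt (bl i) σ).card
        ≤ ∑ _σ : Equiv.Perm {x // x ∈ S},
            ∏ k : Fin e, ((S ∩ X k).card + d - 1).choose (d - 1) :=
          Finset.sum_le_sum (fun σ _ => step2 σ)
      _ = Fintype.card (Equiv.Perm {x // x ∈ S})
            * ∏ k : Fin e, ((S ∩ X k).card + d - 1).choose (d - 1) := by
          rw [Finset.sum_const, Finset.card_univ, smul_eq_mul]
      _ = S.card.factorial * ∏ k : Fin e, ((S ∩ X k).card + d - 1).choose (d - 1) := by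
          rw [Fintype.card_perm, Fintype.card_coe]
  -- final assembly over ℚ
  have hNfacpos : (0 : ℚ) < (S.card.factorial : ℚ) := by
    exact_mod_cast Nat.factorial_pos _
  have inv_eq : ∀ i : Fin m, (∏ k : Fin e,
      ((Nat.multinomial Finset.univ fun r : Fin d => ((A i r) ∩ X k).card : ℕ) : ℚ))⁻¹
      = (Bc i : ℚ) / (S.card.factorial : ℚ) := by
    intro i
    have h1 : ((Bc i : ℚ)) * (∏ k : Fin e,
        ((Nat.multinomial Finset.univ fun r : Fin d => ((A i r) ∩ X k).card : ℕ) : ℚ))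
        = (S.card.factorial : ℚ) := by
      rw [← Nat.cast_prod, ← Nat.cast_mul]
      exact_mod_cast congrArg (fun t : ℕ => (t : ℚ)) (key1 i)
    have hprodpos : (0 : ℚ) < ∏ k : Fin e,
        ((Nat.multinomial Finset.univ fun r : Fin d => ((A i r) ∩ X k).card : ℕ) : ℚ) := by
      apply Finset.prod_pos
      intro k _
      exact_mod_cast Nat.multinomial_pos _ _
    rw [eq_div_iff hNfacpos.ne']
    rw [← h1]
    field_simp
  calc ∑ i : Fin m, (∏ k : Fin e,
      ((Nat.multinomial Finset.univ fun r : Fin d => ((A i r) ∩ X k).card : ℕ) : ℚ))⁻¹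
      = ∑ i : Fin m, (Bc i : ℚ) / (S.card.factorial : ℚ) :=
        Finset.sum_congr rfl (fun i _ => inv_eq i)
    _ = ((∑ i : Fin m, Bc i : ℕ) : ℚ) / (S.card.factorial : ℚ) := by
        rw [← Finset.sum_div, Nat.cast_sum]
    _ ≤ ((S.card.factorial * ∏ k : Fin e, ((S ∩ X k).card + d - 1).choose (d - 1) : ℕ) : ℚ)
          / (S.card.factorial : ℚ) := by
        exact (div_le_div_iff_of_pos_right hNfacpos).mpr (by exact_mod_cast key2)
    _ = ∏ k : Fin e, ((((S ∩ X k).card + d - 1).choose (d - 1) : ℕ) : ℚ) := by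
        rw [Nat.cast_mul, mul_comm, mul_div_assoc, div_self hNfacpos.ne', mul_one,
          Nat.cast_prod]
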